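/- Suppose (S,E,I,R) : [0,∞) → ℝ⁴ is a differentiable solution of the SEIR system dS/dt = hN − μS − βSI + ρR, dE/dt = βSI − (μ+ε)E, dI/dt = εE − (μ+τ+γ)I, dR/dt = γI − (μ+ρ)R with N > 0 constant and all initial values positive. Then S(t), E(t), I(t), R(t) remain strictly positive for all t ≥ 0. -/

import Mathlib

open Set Real Filter Topology

/-- Exponential lower bound: if `f' ≥ -c f` on `[0,T]` and `f 0 > 0`, then `f T > 0`. -/
lemma seir_exp_aux (f f' : ℝ → ℝ) (c T : ℝ) (hc : 0 ≤ c) (hT : 0 < T)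
    (hd : ∀ t ∈ Icc (0:ℝ) T, HasDerivAt f (f' t) t)
    (hb : ∀ t ∈ Icc (0:ℝ) T, -(c * f t) ≤ f' t)
    (h0 : 0 < f 0) : 0 < f T := by
  set g : ℝ → ℝ := fun t => f t * Real.exp (c * t) with hg
  have hgd : ∀ t ∈ Icc (0:ℝ) T,
      HasDerivAt g ((f' t + c * f t) * Real.exp (c * t)) t := by
    intro t ht
    have he : HasDerivAt (fun t => Real.exp (c * t)) (c * Real.exp (c * t)) t := by
      simpa [mul_comm] using ((hasDerivAt_id t).const_mul c).exp
    have := (hd t ht).fun_mul he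
    refine this.congr_deriv ?_
    ring
  have hmono : MonotoneOn g (Icc 0 T) := by
    apply monotoneOn_of_deriv_nonneg (convex_Icc 0 T)
    · exact fun t ht => (hgd t ht).continuousAt.continuousWithinAt
    · intro t ht
      rw [interior_Icc] at ht
      exact (hgd t ⟨ht.1.le, ht.2.le⟩).differentiableAt.differentiableWithinAt
    · intro t ht
      rw [interior_Icc] at ht
      rw [(hgd t ⟨ht.1.le, ht.2.le⟩).deriv]
      have := hb t ⟨ht.1.le, ht.2.le⟩
      have hexp := Real.exp_pos (c * t)
      nlinarith
  have h01 : g 0 ≤ g T := hmono ⟨le_refl 0, hT.le⟩ ⟨hT.le, le_refl T⟩ hT.le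
  have hg0 : g 0 = f 0 := by simp [hg]
  have hexp := Real.exp_pos (c * T)
  have hgT : 0 < g T := lt_of_lt_of_le (hg0 ▸ h0) h01
  have : g T = f T * Real.exp (c * T) := rfl
  nlinarith

theorem seir_solutions_positive
    (h μ β ρ ε τ γ N : ℝ)
    (hh : 0 < h) (hμ : 0 < μ) (hβ : 0 < β) (hρ : 0 < ρ)
    (hε : 0 < ε) (hτ : 0 < τ) (hγ : 0 < γ) (hN : 0 < N)
    (S E I R : ℝ → ℝ)
    (hS : ∀ t ≥ (0 : ℝ), HasDerivAt S (h * N - μ * S t - β * S t * I t + ρ * R t) t)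
    (hE : ∀ t ≥ (0 : ℝ), HasDerivAt E (β * S t * I t - (μ + ε) * E t) t)
    (hI : ∀ t ≥ (0 : ℝ), HasDerivAt I (ε * E t - (μ + τ + γ) * I t) t)
    (hR : ∀ t ≥ (0 : ℝ), HasDerivAt R (γ * I t - (μ + ρ) * R t) t)
    (hS0 : 0 < S 0) (hE0 : 0 < E 0) (hI0 : 0 < I 0) (hR0 : 0 < R 0) :
    ∀ t ≥ (0 : ℝ), 0 < S t ∧ 0 < E t ∧ 0 < I t ∧ 0 < R t := by
  by_contra hcon
  set B : Set ℝ := {t | 0 ≤ t ∧ (S t ≤ 0 ∨ E t ≤ 0 ∨ I t ≤ 0 ∨ R t ≤ 0)} with hBdef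
  -- continuity on [0,∞)
  have hSc : ContinuousOn S (Ici 0) := fun t ht => (hS t ht).continuousAt.continuousWithinAt
  have hEc : ContinuousOn E (Ici 0) := fun t ht => (hE t ht).continuousAt.continuousWithinAt
  have hIc : ContinuousOn I (Ici 0) := fun t ht => (hI t ht).continuousAt.continuousWithinAt
  have hRc : ContinuousOn R (Ici 0) := fun t ht => (hR t ht).continuousAt.continuousWithinAt
  have hBne : B.Nonempty := by
    by_contra hne
    apply hcon
    intro t ht
    by_contra hp
    apply hne
    refine ⟨t, ht, ?_⟩
    by_contra hq
    push_neg at hq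
    exact hp ⟨hq.1, hq.2.1, hq.2.2.1, hq.2.2.2⟩
  have hBbdd : BddBelow B := ⟨0, fun x hx => hx.1⟩
  have hBclosed : IsClosed B := by
    have : B = (Ici 0 ∩ S ⁻¹' Iic 0) ∪ (Ici 0 ∩ E ⁻¹' Iic 0) ∪
        (Ici 0 ∩ I ⁻¹' Iic 0) ∪ (Ici 0 ∩ R ⁻¹' Iic 0) := by
      ext t
      simp only [hBdef, mem_setOf_eq, mem_union, mem_inter_iff, mem_preimage, mem_Iic, mem_Ici]
      tauto
    rw [this]
    exact (((hSc.preimage_isClosed_of_isClosed isClosed_Ici isClosed_Iic).union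
      (hEc.preimage_isClosed_of_isClosed isClosed_Ici isClosed_Iic)).union
      (hIc.preimage_isClosed_of_isClosed isClosed_Ici isClosed_Iic)).union
      (hRc.preimage_isClosed_of_isClosed isClosed_Ici isClosed_Iic)
  set T := sInf B with hTdef
  have hTB : T ∈ B := hBclosed.csInf_mem hBne hBbdd
  have hT0 : 0 ≤ T := hTB.1
  have h0nB : (0:ℝ) ∉ B := by
    intro h0B
    rcases h0B.2 with hx | hx | hx | hx <;> linarith
  have hTpos : 0 < T := lt_of_le_of_ne hT0 (fun hEq => h0nB (hEq ▸ hTB))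
  -- strict positivity before T
  have hpos : ∀ t, 0 ≤ t → t < T → 0 < S t ∧ 0 < E t ∧ 0 < I t ∧ 0 < R t := by
    intro t ht htT
    by_contra hp
    have htB : t ∈ B := by
      refine ⟨ht, ?_⟩
      by_contra hq
      push_neg at hq
      exact hp ⟨hq.1, hq.2.1, hq.2.2.1, hq.2.2.2⟩
    exact absurd (csInf_le hBbdd htB) (not_le.mpr htT)
  -- nonnegativity at T by continuity from the left
  have key : ∀ f : ℝ → ℝ, ContinuousAt f T →
      (∀ t, 0 ≤ t → t < T → 0 < f t) → 0 ≤ f T := by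
    intro f hfc hfp
    refine ge_of_tendsto (hfc.continuousWithinAt :
      Tendsto f (𝓝[Iio T] T) (𝓝 (f T))) ?_
    filter_upwards [Ioo_mem_nhdsLT hTpos] with t ht
    exact (hfp t ht.1.le ht.2).le
  have hSTnn : 0 ≤ S T := key S (hS T hT0).continuousAt fun t h1 h2 => (hpos t h1 h2).1
  have hETnn : 0 ≤ E T := key E (hE T hT0).continuousAt fun t h1 h2 => (hpos t h1 h2).2.1
  have hITnn : 0 ≤ I T := key I (hI T hT0).continuousAt fun t h1 h2 => (hpos t h1 h2).2.2.1
  have hRTnn : 0 ≤ R T := key R (hR T hT0).continuousAt fun t h1 h2 => (hpos t h1 h2).2.2.2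
  have hSnn : ∀ t ∈ Icc (0:ℝ) T, 0 ≤ S t := by
    intro t ht
    rcases lt_or_eq_of_le ht.2 with h2 | h2
    · exact (hpos t ht.1 h2).1.le
    · exact h2 ▸ hSTnn
  have hEnn : ∀ t ∈ Icc (0:ℝ) T, 0 ≤ E t := by
    intro t ht
    rcases lt_or_eq_of_le ht.2 with h2 | h2
    · exact (hpos t ht.1 h2).2.1.le
    · exact h2 ▸ hETnn
  have hInn : ∀ t ∈ Icc (0:ℝ) T, 0 ≤ I t := by
    intro t ht
    rcases lt_or_eq_of_le ht.2 with h2 | h2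
    · exact (hpos t ht.1 h2).2.2.1.le
    · exact h2 ▸ hITnn
  have hRnn : ∀ t ∈ Icc (0:ℝ) T, 0 ≤ R t := by
    intro t ht
    rcases lt_or_eq_of_le ht.2 with h2 | h2
    · exact (hpos t ht.1 h2).2.2.2.le
    · exact h2 ▸ hRTnn
  -- bound on I over [0, T]
  obtain ⟨C, hC⟩ := isCompact_Icc.exists_bound_of_continuousOn
    (hIc.mono (Icc_subset_Ici_self : Icc (0:ℝ) T ⊆ Ici 0))
  have hC0 : 0 ≤ C := le_trans (norm_nonneg _) (hC 0 ⟨le_refl 0, hT0⟩)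
  -- each component is positive at T by the exponential bound
  have hET : 0 < E T := by
    refine seir_exp_aux E (fun t => β * S t * I t - (μ + ε) * E t) (μ + ε) T
      (by positivity) hTpos (fun t ht => hE t ht.1) (fun t ht => ?_) hE0
    have := mul_nonneg (mul_nonneg hβ.le (hSnn t ht)) (hInn t ht)
    linarith
  have hIT : 0 < I T := by
    refine seir_exp_aux I (fun t => ε * E t - (μ + τ + γ) * I t) (μ + τ + γ) T
      (by positivity) hTpos (fun t ht => hI t ht.1) (fun t ht => ?_) hI0
    have := mul_nonneg hε.le (hEnn t ht)
    linarith
  have hRT : 0 < R T := by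
    refine seir_exp_aux R (fun t => γ * I t - (μ + ρ) * R t) (μ + ρ) T
      (by positivity) hTpos (fun t ht => hR t ht.1) (fun t ht => ?_) hR0
    have := mul_nonneg hγ.le (hInn t ht)
    linarith
  have hST : 0 < S T := by
    refine seir_exp_aux S (fun t => h * N - μ * S t - β * S t * I t + ρ * R t) (μ + β * C) T
      (by positivity) hTpos (fun t ht => hS t ht.1) (fun t ht => ?_) hS0
    have h1 : β * S t * I t ≤ β * S t * C := by
      refine mul_le_mul_of_nonneg_left ?_ (mul_nonneg hβ.le (hSnn t ht))
      calc I t ≤ |I t| := le_abs_self _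
        _ ≤ C := by simpa using hC t ht
    have h2 : 0 ≤ ρ * R t := mul_nonneg hρ.le (hRnn t ht)
    have h3 : 0 < h * N := mul_pos hh hN
    nlinarith
  rcases hTB.2 with hx | hx | hx | hx <;> linarith
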